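/- Under the hypotheses of the omega-limit contraction lemma, R also has incremental limit gain γ on U₀: if (ω₁,η₁),(ω₂,η₂) ∈ R with ω₁, ω₂ convergent to limits in U₀, then both η₁, η₂ converge and dist(lim η₁, lim η₂) ≤ γ(dist(lim ω₁, lim ω₂)). -/

import Mathlib

open Filter
open scoped NNReal ENNReal

/-- Asymptotic amplitude of a signal `ω : ℝ≥0 → M`:
`‖ω‖_aa = lim_{T→∞} sup_{t,s ≥ T} dist (ω t) (ω s)`. -/
noncomputable def asympAmp {M : Type*} [PseudoMetricSpace M] (ω : ℝ≥0 → M) : ℝ≥0∞ :=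
  Filter.limsup (fun p : ℝ≥0 × ℝ≥0 => edist (ω p.1) (ω p.2)) (atTop ×ˢ atTop)

/-- A behavior with input-value space `U` and output-value space `Y`: a relation between
`U`-valued and `Y`-valued signals. -/
abbrev Behavior (U Y : Type*) := Set ((ℝ≥0 → U) × (ℝ≥0 → Y))

/-- Class `K∞` functions: continuous, strictly increasing, unbounded, vanishing at `0`. -/
def KInfty (γ : ℝ≥0 → ℝ≥0) : Prop :=
  Continuous γ ∧ StrictMono γ ∧ γ 0 = 0 ∧ Tendsto γ atTop atTop

/-- Extension of a gain function to `[0,∞]`, sending `∞` to `∞`. -/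
noncomputable def extGain (γ : ℝ≥0 → ℝ≥0) : ℝ≥0∞ → ℝ≥0∞ :=
  fun x => if x = ⊤ then ⊤ else (γ x.toNNReal : ℝ≥0∞)

/-- `R` has Cauchy gain `γ` : `‖η‖_aa ≤ γ (‖ω‖_aa)` for all `(ω, η) ∈ R`. -/
def HasCauchyGain {U Y : Type*} [MetricSpace U] [MetricSpace Y]
    (R : Behavior U Y) (γ : ℝ≥0 → ℝ≥0) : Prop :=
  ∀ p ∈ R, asympAmp p.2 ≤ extGain γ (asympAmp p.1)

/-- `R` has incremental limit gain `κ` : whenever both inputs converge,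
`limsup_{t→∞} dist (η₁ t) (η₂ t) ≤ κ (dist ω₁^∞ ω₂^∞)`. -/
def HasIncrLimitGain {U Y : Type*} [MetricSpace U] [MetricSpace Y]
    (R : Behavior U Y) (κ : ℝ≥0 → ℝ≥0) : Prop :=
  ∀ p q, p ∈ R → q ∈ R → ∀ u₁ u₂ : U,
    Tendsto p.1 atTop (nhds u₁) → Tendsto q.1 atTop (nhds u₂) →
    Filter.limsup (fun t => edist (p.2 t) (q.2 t)) atTop ≤ (κ (nndist u₁ u₂) : ℝ≥0∞)

/-- The omega-limit set `Ω⁺[ω]` of a signal. -/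
def omegaLim {M : Type*} [MetricSpace M] (ω : ℝ≥0 → M) : Set M :=
  {u | ∃ t : ℕ → ℝ≥0, Tendsto t atTop atTop ∧ Tendsto (fun n => ω (t n)) atTop (nhds u)}

/-- `ω` is precompact: its image lies in a compact set. -/
def Precompact {M : Type*} [MetricSpace M] (ω : ℝ≥0 → M) : Prop :=
  ∃ K : Set M, IsCompact K ∧ ∀ t, ω t ∈ K

lemma omegaLim_subset_of_tendsto {M : Type*} [MetricSpace M] {ω : ℝ≥0 → M} {u : M}
    (h : Tendsto ω atTop (nhds u)) : omegaLim ω ⊆ {u} := by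
  rintro v ⟨t, ht, hv⟩
  exact tendsto_nhds_unique hv (h.comp ht)

lemma mem_omegaLim_of_tendsto {M : Type*} [MetricSpace M] {ω : ℝ≥0 → M} {u : M}
    (h : Tendsto ω atTop (nhds u)) : u ∈ omegaLim ω := by
  refine ⟨fun n => n, ?_, h.comp ?_⟩ <;>
    exact tendsto_atTop_mono (fun n => le_refl _) (tendsto_natCast_atTop_atTop)

lemma tendsto_of_precompact_omegaLim {M : Type*} [MetricSpace M] {η : ℝ≥0 → M} {y : M}
    (hpc : Precompact η) (hω : omegaLim η ⊆ {y}) : Tendsto η atTop (nhds y) := by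
  obtain ⟨K, hK, hmem⟩ := hpc
  rw [Metric.tendsto_atTop]
  by_contra h
  push_neg at h
  obtain ⟨ε, hε, hfreq⟩ := h
  -- build sequence
  choose t ht hd using fun n : ℕ => hfreq (n : ℝ≥0)
  have htop : Tendsto t atTop atTop :=
    tendsto_atTop_mono ht tendsto_natCast_atTop_atTop
  obtain ⟨z, hzK, φ, hφ, hconv⟩ := hK.tendsto_subseq (fun n => hmem (t n))
  have hz : z ∈ omegaLim η := ⟨t ∘ φ, htop.comp hφ.tendsto_atTop, hconv⟩
  have : z = y := hω hz
  subst this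
  have := hconv.eventually (Metric.ball_mem_nhds z hε)
  obtain ⟨n, hn⟩ := this.exists
  exact absurd hn (by simpa using hd (φ n))

lemma omegaLim_nonempty {M : Type*} [MetricSpace M] {η : ℝ≥0 → M}
    (hpc : Precompact η) : (omegaLim η).Nonempty := by
  obtain ⟨K, hK, hmem⟩ := hpc
  obtain ⟨z, hzK, φ, hφ, hconv⟩ := hK.tendsto_subseq (fun n : ℕ => hmem (n : ℝ≥0))
  exact ⟨z, (fun n => (φ n : ℝ≥0)), tendsto_natCast_atTop_atTop.comp hφ.tendsto_atTop, hconv⟩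

/-- Abstract gain lemma via omega-limit contraction: incremental limit gain conclusion. -/
theorem stmt13 {U Y : Type*} [MetricSpace U] [MetricSpace Y]
    [CompleteSpace U] [CompleteSpace Y]
    (R : Behavior U Y) (U₀ : Set U) (hU₀ : IsCompact U₀)
    (γ : ℝ≥0 → ℝ≥0) (hγ : KInfty γ) (Γ : Set U → Set Y)
    (ha : ∀ p ∈ R, omegaLim p.1 ⊆ U₀ → Precompact p.2)
    (hb : ∀ K : Set U, K ⊆ U₀ → IsCompact K →
      ∀ p ∈ R, omegaLim p.1 ⊆ K → omegaLim p.2 ⊆ Γ K)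
    (hc : ∀ K : Set U, K ⊆ U₀ → IsCompact K →
      EMetric.diam (Γ K) ≤ extGain γ (EMetric.diam K)) :
    ∀ p q, p ∈ R → q ∈ R → ∀ u₁ u₂ : U, u₁ ∈ U₀ → u₂ ∈ U₀ →
      Tendsto p.1 atTop (nhds u₁) → Tendsto q.1 atTop (nhds u₂) →
      ∃ (y₁ y₂ : Y), Tendsto p.2 atTop (nhds y₁) ∧ Tendsto q.2 atTop (nhds y₂) ∧
        nndist y₁ y₂ ≤ γ (nndist u₁ u₂) := by
  intro p q hp hq u₁ u₂ hu₁ hu₂ hp1 hq1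
  have key : ∀ (r : (ℝ≥0 → U) × (ℝ≥0 → Y)), r ∈ R → ∀ u : U, u ∈ U₀ →
      Tendsto r.1 atTop (nhds u) → ∃ y, Tendsto r.2 atTop (nhds y) := by
    intro r hr u hu hr1
    have hω : omegaLim r.1 ⊆ {u} := omegaLim_subset_of_tendsto hr1
    have hsub : ({u} : Set U) ⊆ U₀ := by simpa using hu
    have hpc : Precompact r.2 := ha r hr (hω.trans hsub)
    have hΓ : omegaLim r.2 ⊆ Γ {u} := hb {u} hsub isCompact_singleton r hr hω
    have hd : EMetric.diam (Γ {u}) = 0 := by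
      have := hc {u} hsub isCompact_singleton
      simpa [EMetric.diam, Metric.ediam_singleton, extGain, hγ.2.2.1] using this
    obtain ⟨y, hy⟩ := omegaLim_nonempty hpc
    have hss : omegaLim r.2 ⊆ {y} := fun z hz => by
      have := EMetric.edist_le_diam_of_mem (hΓ hz) (hΓ hy)
      simpa [show Metric.ediam (Γ {u}) = 0 from hd, edist_eq_zero] using this
    exact ⟨y, tendsto_of_precompact_omegaLim hpc hss⟩
  obtain ⟨y₁, hy₁⟩ := key p hp u₁ hu₁ hp1
  obtain ⟨y₂, hy₂⟩ := key q hq u₂ hu₂ hq1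
  refine ⟨y₁, y₂, hy₁, hy₂, ?_⟩
  set K : Set U := {u₁, u₂} with hK
  have hKsub : K ⊆ U₀ := by
    rintro x (rfl | rfl); exacts [hu₁, hu₂]
  have hKcpt : IsCompact K := (Set.Finite.insert u₁ (Set.finite_singleton u₂)).isCompact
  have hy₁Γ : y₁ ∈ Γ K := hb K hKsub hKcpt p hp
    ((omegaLim_subset_of_tendsto hp1).trans (by simp [hK])) (mem_omegaLim_of_tendsto hy₁)
  have hy₂Γ : y₂ ∈ Γ K := hb K hKsub hKcpt q hq
    ((omegaLim_subset_of_tendsto hq1).trans (by simp [hK])) (mem_omegaLim_of_tendsto hy₂)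
  have hle : edist y₁ y₂ ≤ extGain γ (EMetric.diam K) :=
    (EMetric.edist_le_diam_of_mem hy₁Γ hy₂Γ).trans (hc K hKsub hKcpt)
  have hdK : EMetric.diam K = edist u₁ u₂ := EMetric.diam_pair
  rw [hdK, extGain, if_neg (edist_ne_top u₁ u₂)] at hle
  have htn : (edist u₁ u₂).toNNReal = nndist u₁ u₂ := by
    rw [edist_nndist, ENNReal.toNNReal_coe]
  rw [htn, edist_nndist, ENNReal.coe_le_coe] at hle
  exact hle
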